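/- The set of points x ∈ [0, 1] whose trajectory under the paradoxical map converges to the origin, i.e., {x ∈ [0,1] : φ^n(x) → 0 as n → ∞}, has Lebesgue measure zero. In other words, with probability one, trajectories with initial conditions sampled according to the Lebesgue measure on [0,1] do not converge to the origin. -/

import Mathlib

open MeasureTheory

/-- The paradoxical map: `φ(x) = x/(1-x)` for `x ∈ (0, 1/2)`, `φ(x) = 2(1-x)` for
`x ∈ [1/2, 1]`, and `φ(x) = 0` otherwise (in particular `φ(0) = 0`). -/
noncomputable def psi (x : ℝ) : ℝ :=
  if 0 < x ∧ x < 1 / 2 then x / (1 - x)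
  else if 1 / 2 ≤ x ∧ x ≤ 1 then 2 * (1 - x)
  else 0

lemma psi_mem (x : ℝ) : psi x ∈ Set.Icc (0:ℝ) 1 := by
  unfold psi
  split_ifs with h1 h2
  · have h1x : (0:ℝ) < 1 - x := by linarith [h1.2]
    constructor
    · exact div_nonneg h1.1.le h1x.le
    · rw [div_le_one h1x]; linarith [h1.2]
  · constructor <;> [linarith [h2.2]; linarith [h2.1]]
  · simp

lemma exists_zero {x : ℝ} (hx : x ∈ Set.Icc (0:ℝ) 1)
    (h : Filter.Tendsto (fun n => psi^[n] x) Filter.atTop (nhds 0)) :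
    ∃ n, psi^[n] x = 0 := by
  by_contra hc
  push_neg at hc
  have hmem : ∀ n, psi^[n] x ∈ Set.Icc (0:ℝ) 1 := by
    intro n
    induction n with
    | zero => exact hx
    | succ n ih => rw [Function.iterate_succ_apply']; exact psi_mem _
  have hpos : ∀ n, 0 < psi^[n] x := fun n => lt_of_le_of_ne (hmem n).1 (Ne.symm (hc n))
  obtain ⟨N, hN⟩ := (Filter.eventually_atTop).1
    (h.eventually (gt_mem_nhds (by norm_num : (0:ℝ) < 1/2)))
  have key : ∀ k, 1 / (psi^[N + k] x) = 1 / (psi^[N] x) - k := by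
    intro k
    induction k with
    | zero => simp
    | succ k ih =>
      have hy : psi^[N + k] x < 1/2 := hN (N + k) (Nat.le_add_right _ _)
      have hyp : 0 < psi^[N + k] x := hpos _
      have hstep : psi^[N + (k+1)] x = psi^[N + k] x / (1 - psi^[N + k] x) := by
        rw [show N + (k+1) = (N + k) + 1 by ring, Function.iterate_succ_apply']
        unfold psi
        rw [if_pos ⟨hyp, hy⟩]
      have h1y : (0:ℝ) < 1 - psi^[N + k] x := by linarith
      rw [hstep]
      push_cast
      rw [one_div_div, sub_div, div_self hyp.ne', ih]
      ring
  set y := psi^[N] x with hy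
  set k := ⌈1 / y⌉₊ + 1 with hk
  have h1 := key k
  have h2 : 0 < 1 / (psi^[N + k] x) := one_div_pos.2 (hpos _)
  have h3 : 1 / y ≤ (⌈1 / y⌉₊ : ℝ) := Nat.le_ceil _
  have h4 : ((k : ℕ) : ℝ) = (⌈1 / y⌉₊ : ℝ) + 1 := by push_cast [hk]; ring
  rw [h4] at h1
  linarith

lemma countable_zero (n : ℕ) :
    Set.Countable {x : ℝ | x ∈ Set.Icc (0:ℝ) 1 ∧ psi^[n] x = 0} := by
  induction n with
  | zero =>
    refine Set.Countable.mono ?_ (Set.countable_singleton (0:ℝ))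
    rintro x ⟨_, hx⟩
    simpa using hx
  | succ n ih =>
    have hsub : {x : ℝ | x ∈ Set.Icc (0:ℝ) 1 ∧ psi^[n+1] x = 0} ⊆
        insert 0 ((fun y => y / (1 + y)) '' {x : ℝ | x ∈ Set.Icc (0:ℝ) 1 ∧ psi^[n] x = 0} ∪
                  (fun y => 1 - y / 2) '' {x : ℝ | x ∈ Set.Icc (0:ℝ) 1 ∧ psi^[n] x = 0}) := by
      rintro x ⟨hx, hiter⟩
      rw [Function.iterate_succ_apply] at hiter
      have hy : psi x ∈ Set.Icc (0:ℝ) 1 := psi_mem x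
      by_cases h1 : 0 < x ∧ x < 1/2
      · right; left
        refine ⟨psi x, ⟨hy, hiter⟩, ?_⟩
        have hpsix : psi x = x / (1 - x) := by unfold psi; rw [if_pos h1]
        have h1x : (1:ℝ) - x ≠ 0 := by linarith [h1.2]
        rw [hpsix]
        field_simp
        ring
      · by_cases h2 : 1/2 ≤ x ∧ x ≤ 1
        · right; right
          refine ⟨psi x, ⟨hy, hiter⟩, ?_⟩
          have hpsix : psi x = 2 * (1 - x) := by unfold psi; rw [if_neg h1, if_pos h2]
          rw [hpsix]; ring
        · left
          have hx0 : ¬ (0 < x) := fun hpos =>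
            h2 ⟨le_of_not_gt (fun hlt => h1 ⟨hpos, hlt⟩), hx.2⟩
          have : x = 0 := le_antisymm (le_of_not_gt hx0) hx.1
          simp [this]
    exact Set.Countable.mono hsub (((ih.image _).union (ih.image _)).insert 0)

/-- The set of points of `[0,1]` whose trajectory under the paradoxical map converges to the
origin has Lebesgue measure zero. -/
theorem stmt_11 :
    volume {x : ℝ | x ∈ Set.Icc (0 : ℝ) 1 ∧
      Filter.Tendsto (fun n => psi^[n] x) Filter.atTop (nhds 0)} = 0 := by
  have hsub : {x : ℝ | x ∈ Set.Icc (0 : ℝ) 1 ∧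
      Filter.Tendsto (fun n => psi^[n] x) Filter.atTop (nhds 0)} ⊆
      ⋃ n, {x : ℝ | x ∈ Set.Icc (0:ℝ) 1 ∧ psi^[n] x = 0} := by
    rintro x ⟨hx, ht⟩
    obtain ⟨n, hn⟩ := exists_zero hx ht
    exact Set.mem_iUnion.2 ⟨n, ⟨hx, hn⟩⟩
  exact measure_mono_null hsub ((Set.countable_iUnion countable_zero).measure_zero _)
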